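/- There exists a constant C > 0 such that for every natural number N ≥ 16, ∑_{i = 1}^{⌊log₂ log₂ N⌋} H₂(2^(−i)) · (2^i / log₂ N) · N ≤ C · N. (This is the paper's estimate that the total communication cost of the probabilistic synchronization stage, where step i exchanges checksums of length λ_i = 2^i / log₂ N per block over N blocks with a fraction at most 2^(−i) of differing blocks, is O(N).) -/

import Mathlib

open Real Finset

theorem probabilistic_stage_cost :
    ∃ C : ℝ, 0 < C ∧ ∀ N : ℕ, 16 ≤ N →
      ∑ i ∈ Finset.Icc 1 ⌊Real.logb 2 (Real.logb 2 N)⌋₊,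
          (((2 : ℝ) ^ (-(i : ℤ)) * Real.logb 2 (1 / (2 : ℝ) ^ (-(i : ℤ)))
            + (1 - (2 : ℝ) ^ (-(i : ℤ))) *
                Real.logb 2 (1 / (1 - (2 : ℝ) ^ (-(i : ℤ)))))
           * ((2 : ℝ) ^ i / Real.logb 2 N) * N)
        ≤ C * N := by
  refine ⟨25, by norm_num, fun N hN => ?_⟩
  have hN0 : (0:ℝ) < N := by positivity
  have hlog2 : (1/2 : ℝ) ≤ Real.log 2 := by
    have := Real.log_two_gt_d9; linarith
  have hlog2pos : (0:ℝ) < Real.log 2 := by linarith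
  set L := Real.logb 2 (N:ℝ) with hLdef
  have hL4 : (4:ℝ) ≤ L := by
    have h16 : (16:ℝ) ≤ N := by exact_mod_cast hN
    have : Real.logb 2 (16:ℝ) ≤ L := by
      exact Real.logb_le_logb_of_le (by norm_num) (by norm_num) h16
    have h16' : Real.logb 2 (16:ℝ) = 4 := by
      rw [show (16:ℝ) = 2^(4:ℕ) by norm_num, Real.logb_pow,
        Real.logb_self_eq_one (by norm_num)]
      norm_num
    linarith
  have hLpos : (0:ℝ) < L := by linarith
  set M := ⌊Real.logb 2 L⌋₊ with hMdef
  -- step 1: each term is at most (i+2) * N / L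
  have hterm : ∀ i ∈ Finset.Icc 1 M,
      (((2 : ℝ) ^ (-(i : ℤ)) * Real.logb 2 (1 / (2 : ℝ) ^ (-(i : ℤ)))
            + (1 - (2 : ℝ) ^ (-(i : ℤ))) *
                Real.logb 2 (1 / (1 - (2 : ℝ) ^ (-(i : ℤ)))))
           * ((2 : ℝ) ^ i / L) * N) ≤ ((i:ℝ)+2) * N / L := by
    intro i hi
    have hi1 : 1 ≤ i := (Finset.mem_Icc.mp hi).1
    set p : ℝ := (2:ℝ) ^ (-(i : ℤ)) with hpdef
    have hp0 : 0 < p := by positivity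
    have hphalf : p ≤ 1/2 := by
      rw [hpdef, show (1/2:ℝ) = (2:ℝ)^(-1:ℤ) by norm_num]
      apply zpow_le_zpow_right₀ (by norm_num)
      omega
    have h1p : (0:ℝ) < 1 - p := by linarith
    -- first summand
    have hfirst : p * Real.logb 2 (1 / p) = p * i := by
      have h1p' : 1 / p = (2:ℝ)^(i:ℕ) := by
        rw [hpdef, one_div, ← zpow_neg, neg_neg, zpow_natCast]
      rw [h1p', Real.logb_pow, Real.logb_self_eq_one (by norm_num)]
      ring
    -- second summand
    have hsecond : (1 - p) * Real.logb 2 (1 / (1 - p)) ≤ 2 * p := by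
      have hlog : Real.log (1 / (1 - p)) ≤ 1/(1-p) - 1 :=
        Real.log_le_sub_one_of_pos (by positivity)
      have h2 : (1 - p) * Real.log (1 / (1 - p)) ≤ p := by
        have := mul_le_mul_of_nonneg_left hlog (le_of_lt h1p)
        have heq : (1-p) * (1/(1-p) - 1) = p := by field_simp; ring
        linarith [heq ▸ this]
      rw [Real.logb, div_eq_mul_inv, ← mul_assoc]
      calc (1 - p) * Real.log (1 / (1 - p)) * (Real.log 2)⁻¹
          ≤ p * (Real.log 2)⁻¹ := by
            apply mul_le_mul_of_nonneg_right h2 (by positivity)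
        _ ≤ p * 2 := by
            apply mul_le_mul_of_nonneg_left _ (le_of_lt hp0)
            rw [inv_le_comm₀ hlog2pos (by norm_num)]
            linarith
        _ = 2 * p := by ring
    have hH : p * Real.logb 2 (1/p) + (1-p) * Real.logb 2 (1/(1-p)) ≤ p * ((i:ℝ)+2) := by
      rw [hfirst]; linarith [hsecond]
    have hcancel : p * (2:ℝ)^i = 1 := by
      rw [hpdef, show ((2:ℝ)^i : ℝ) = (2:ℝ)^((i:ℤ)) by exact (zpow_natCast 2 i).symm,
        ← zpow_add₀ (by norm_num : (2:ℝ) ≠ 0)]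
      simp
    have hfac : (0:ℝ) ≤ (2:ℝ)^i / L * N := by positivity
    calc (p * Real.logb 2 (1/p) + (1-p) * Real.logb 2 (1/(1-p))) * ((2:ℝ)^i / L) * N
        ≤ p * ((i:ℝ)+2) * ((2:ℝ)^i / L) * N := by
          have := mul_le_mul_of_nonneg_right hH hfac
          calc (p * Real.logb 2 (1/p) + (1-p) * Real.logb 2 (1/(1-p))) * ((2:ℝ)^i / L) * N
              = (p * Real.logb 2 (1/p) + (1-p) * Real.logb 2 (1/(1-p))) * ((2:ℝ)^i / L * N) := by ring
            _ ≤ p * ((i:ℝ)+2) * ((2:ℝ)^i / L * N) := this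
            _ = p * ((i:ℝ)+2) * ((2:ℝ)^i / L) * N := by ring
      _ = ((i:ℝ)+2) * N / L := by
          have heq : p * ((i:ℝ)+2) * ((2:ℝ)^i / L) * N
              = (p * (2:ℝ)^i) * (((i:ℝ)+2) * N / L) := by ring
          rw [heq, hcancel, one_mul]
  have hsum : ∑ i ∈ Finset.Icc 1 M,
      (((2 : ℝ) ^ (-(i : ℤ)) * Real.logb 2 (1 / (2 : ℝ) ^ (-(i : ℤ)))
            + (1 - (2 : ℝ) ^ (-(i : ℤ))) *
                Real.logb 2 (1 / (1 - (2 : ℝ) ^ (-(i : ℤ)))))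
           * ((2 : ℝ) ^ i / L) * N)
      ≤ ∑ i ∈ Finset.Icc 1 M, ((i:ℝ)+2) * N / L :=
    Finset.sum_le_sum hterm
  -- step 2: the bound sum
  have hMbound : (M:ℝ) ≤ Real.logb 2 L := by
    apply Nat.floor_le
    apply Real.logb_nonneg (by norm_num)
    linarith
  have hsqrtL : (2:ℝ) ≤ Real.sqrt L := by
    rw [show (2:ℝ) = Real.sqrt 4 by
      rw [show (4:ℝ) = 2^2 by norm_num, Real.sqrt_sq (by norm_num)]]
    exact Real.sqrt_le_sqrt hL4
  have hlogbL : Real.logb 2 L ≤ 4 * Real.sqrt L := by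
    have hlogL : Real.log L ≤ 2 * Real.sqrt L := by
      have h1 : Real.log (Real.sqrt L) ≤ Real.sqrt L - 1 :=
        Real.log_le_sub_one_of_pos (by positivity)
      have h2 : Real.log (Real.sqrt L) = Real.log L / 2 :=
        Real.log_sqrt (le_of_lt hLpos)
      linarith
    have hlogLnn : 0 ≤ Real.log L := Real.log_nonneg (by linarith)
    rw [Real.logb, div_le_iff₀ hlog2pos]
    nlinarith [Real.sqrt_nonneg L]
  have hM2 : (M:ℝ) + 2 ≤ 5 * Real.sqrt L := by
    have : Real.sqrt L ≥ 2 := hsqrtL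
    linarith [hMbound, hlogbL]
  have hM2sq : ((M:ℝ) + 2)^2 ≤ 25 * L := by
    have hs : Real.sqrt L ^ 2 = L := Real.sq_sqrt (le_of_lt hLpos)
    nlinarith [Real.sqrt_nonneg L, hM2]
  have hsum2 : ∑ i ∈ Finset.Icc 1 M, ((i:ℝ)+2) * N / L ≤ 25 * N := by
    have hstep : ∑ i ∈ Finset.Icc 1 M, ((i:ℝ)+2) ≤ (M:ℝ) * ((M:ℝ)+2) := by
      calc ∑ i ∈ Finset.Icc 1 M, ((i:ℝ)+2)
          ≤ ∑ i ∈ Finset.Icc 1 M, ((M:ℝ)+2) := by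
            apply Finset.sum_le_sum
            intro i hi
            have := (Finset.mem_Icc.mp hi).2
            have : (i:ℝ) ≤ M := by exact_mod_cast this
            linarith
        _ = (Finset.Icc 1 M).card * ((M:ℝ)+2) := by
            rw [Finset.sum_const, nsmul_eq_mul]
        _ = (M:ℝ) * ((M:ℝ)+2) := by
            norm_num [Nat.card_Icc]
    have hMM : (M:ℝ) * ((M:ℝ)+2) ≤ 25 * L := by nlinarith [hM2sq, (Nat.cast_nonneg M : (0:ℝ) ≤ (M:ℝ))]
    calc ∑ i ∈ Finset.Icc 1 M, ((i:ℝ)+2) * N / L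
        = ∑ i ∈ Finset.Icc 1 M, ((i:ℝ)+2) * ((N:ℝ) / L) :=
          Finset.sum_congr rfl fun i _ => mul_div_assoc _ _ _
      _ = (∑ i ∈ Finset.Icc 1 M, ((i:ℝ)+2)) * ((N:ℝ) / L) := by
          rw [Finset.sum_mul]
      _ ≤ 25 * L * ((N:ℝ) / L) := by
          exact mul_le_mul_of_nonneg_right (hstep.trans hMM) (by positivity)
      _ = 25 * N := by field_simp
  calc _ ≤ _ := hsum
    _ ≤ 25 * (N:ℝ) := hsum2
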